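/- Terminal States Similarity: starting from equivalent states s₀ (HIG) and ŝ₀ (DAG), executing the interleaved move a₁ b₁ … aₙ bₙ in the HIG and the corresponding delayed move a₁ … aₙ b₁ … bₙ in the DAG yields similar terminal states: the resulting beliefs are equal, and the DAG's resulting true value lies in the HIG's resulting belief space. -/

import Mathlib

/-- One HIG round: Player-2 action `p.1` updates the belief, Player-1 action `p.2`
(constrained by `β p.1`) updates the true value, and the belief space is updated to
`{Eff₁ b t : b ∈ β p.1, t ∈ Ω}`. -/
def higStep {T U A₁ A₂ : Type*} (Eff₁ : A₁ → T → T) (Eff₂ : A₂ → U → U)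
    (β : A₂ → Set A₁) (s : T × U × Set T) (p : A₂ × A₁) : T × U × Set T :=
  (Eff₁ p.2 s.1, Eff₂ p.1 s.2.1, {t' | ∃ b ∈ β p.1, ∃ t ∈ s.2.2, t' = Eff₁ b t})

/-- Terminal States Similarity: starting from equivalent states (same true value `t₀`,
same belief `u₀`, belief space `{t₀}`), the delayed DAG execution ends in a state
similar to the HIG terminal state: equal beliefs, and the DAG true value lies in the
HIG belief space. -/
lemma terminal_aux {T U A₁ A₂ : Type*}
    (Eff₁ : A₁ → T → T) (Eff₂ : A₂ → U → U) (β : A₂ → Set A₁) :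
    ∀ (ps : List (A₂ × A₁)), (∀ p ∈ ps, p.2 ∈ β p.1) →
    ∀ (s : T × U × Set T) (t : T), t ∈ s.2.2 →
    (ps.map Prod.fst).foldl (fun u a => Eff₂ a u) s.2.1
        = (ps.foldl (higStep Eff₁ Eff₂ β) s).2.1 ∧
    (ps.map Prod.snd).foldl (fun t b => Eff₁ b t) t
        ∈ (ps.foldl (higStep Eff₁ Eff₂ β) s).2.2 := by
  intro ps
  induction ps with
  | nil => intro _ s t ht; exact ⟨rfl, ht⟩
  | cons p ps ih =>
      intro hβ s t ht
      have h := ih (fun q hq => hβ q (List.mem_cons_of_mem _ hq))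
        (higStep Eff₁ Eff₂ β s p) (Eff₁ p.2 t)
        ⟨p.2, hβ p (List.mem_cons_self), t, ht, rfl⟩
      simpa [higStep] using h

theorem terminal_states_similarity {T U A₁ A₂ : Type*}
    (Eff₁ : A₁ → T → T) (Eff₂ : A₂ → U → U) (β : A₂ → Set A₁)
    (ps : List (A₂ × A₁)) (hβ : ∀ p ∈ ps, p.2 ∈ β p.1)
    (t₀ : T) (u₀ : U) :
    (ps.map Prod.fst).foldl (fun u a => Eff₂ a u) u₀
        = (ps.foldl (higStep Eff₁ Eff₂ β) (t₀, u₀, {t₀})).2.1 ∧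
    (ps.map Prod.snd).foldl (fun t b => Eff₁ b t) t₀
        ∈ (ps.foldl (higStep Eff₁ Eff₂ β) (t₀, u₀, {t₀})).2.2 :=
  terminal_aux Eff₁ Eff₂ β ps hβ (t₀, u₀, {t₀}) t₀ rfl
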